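/- Let L = diag(L_1, L_2) be a block-diagonal Laplacian corresponding to two connected components with vertex sets V_1 and V_2, and suppose some cluster C_1 of the partition intersects both V_1 and V_2, and moreover C_1 is isolated (no edges between C_1 and other clusters, so L restricted to rows of C_1 vanishes off C_1, and Lu = 0 for any u supported and constant on C_1∩V_1 and on C_1∩V_2). Then for every positive diagonal matrix D = diag(d) there exists a nonzero vector u in the transverse space T = {u : ∑_{i∈C_k} d_i u_i = 0 ∀k} with uᵀ D L u = 0. In particular, the strict inequality (DL + LᵀD)|_T < 0 fails for every positive diagonal D. -/
import Mathlib


open Finset Matrix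

theorem disconnected_cluster_obstruction
    (m K : ℕ) (c : Fin m → Fin K) (k₁ : Fin K)
    (V₁ V₂ : Set (Fin m)) (hdisj : Disjoint V₁ V₂) (hcover : V₁ ∪ V₂ = Set.univ)
    (L : Matrix (Fin m) (Fin m) ℝ)
    -- block-diagonal: no edges between V₁ and V₂
    (hblock : ∀ i j, (i ∈ V₁ ∧ j ∈ V₂) ∨ (i ∈ V₂ ∧ j ∈ V₁) → L i j = 0)
    -- cluster C_{k₁} meets both components
    (h₁ : ∃ i, c i = k₁ ∧ i ∈ V₁) (h₂ : ∃ i, c i = k₁ ∧ i ∈ V₂)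
    -- C_{k₁} is isolated from the other clusters: L annihilates every vector
    -- supported on C_{k₁} and constant on C_{k₁} ∩ V₁ and on C_{k₁} ∩ V₂
    (hiso : ∀ u : Fin m → ℝ,
      (∀ i, c i ≠ k₁ → u i = 0) →
      (∀ i j, c i = k₁ → c j = k₁ → i ∈ V₁ → j ∈ V₁ → u i = u j) →
      (∀ i j, c i = k₁ → c j = k₁ → i ∈ V₂ → j ∈ V₂ → u i = u j) →
      L.mulVec u = 0) :
    ∀ d : Fin m → ℝ, (∀ i, 0 < d i) →
      ∃ u : Fin m → ℝ, u ≠ 0 ∧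
        (∀ k : Fin K, ∑ i ∈ univ.filter (fun i => c i = k), d i * u i = 0) ∧
        u ⬝ᵥ ((Matrix.diagonal d * L).mulVec u) = 0 ∧
        u ⬝ᵥ ((Matrix.diagonal d * L + Lᵀ * Matrix.diagonal d).mulVec u) = 0 := by
  classical
  intro d hd
  -- i ∉ V₁ ↔ i ∈ V₂
  have hmem : ∀ i : Fin m, i ∉ V₁ ↔ i ∈ V₂ := by
    intro i
    constructor
    · intro h
      have : i ∈ V₁ ∪ V₂ := hcover ▸ Set.mem_univ i
      exact this.resolve_left h
    · intro h h1
      exact Set.disjoint_left.mp hdisj h1 h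
  set a : ℝ := ∑ i ∈ univ.filter (fun i => c i = k₁ ∧ i ∈ V₁), d i with ha_def
  set b : ℝ := ∑ i ∈ univ.filter (fun i => c i = k₁ ∧ i ∉ V₁), d i with hb_def
  obtain ⟨i₁, hi₁c, hi₁⟩ := h₁
  obtain ⟨i₂, hi₂c, hi₂⟩ := h₂
  have ha : 0 < a := by
    apply Finset.sum_pos (fun i _ => hd i)
    exact ⟨i₁, by simp [hi₁c, hi₁]⟩
  have hb : 0 < b := by
    apply Finset.sum_pos (fun i _ => hd i)
    exact ⟨i₂, by simp [hi₂c, (hmem i₂).mpr hi₂]⟩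
  set u : Fin m → ℝ := fun i => if c i = k₁ then (if i ∈ V₁ then b else -a) else 0 with hu_def
  have hLu : L.mulVec u = 0 := by
    apply hiso
    · intro i hi; simp [hu_def, hi]
    · intro i j hi hj hiV hjV; simp [hu_def, hi, hj, hiV, hjV]
    · intro i j hi hj hiV hjV
      have h1 : i ∉ V₁ := fun h => Set.disjoint_left.mp hdisj h hiV
      have h2 : j ∉ V₁ := fun h => Set.disjoint_left.mp hdisj h hjV
      simp [hu_def, hi, hj, h1, h2]
  have hq1 : u ⬝ᵥ ((Matrix.diagonal d * L).mulVec u) = 0 := by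
    rw [← Matrix.mulVec_mulVec, hLu, Matrix.mulVec_zero, dotProduct_zero]
  refine ⟨u, ?_, ?_, hq1, ?_⟩
  · intro h
    have : u i₁ = 0 := congrFun h i₁
    simp [hu_def, hi₁c, hi₁] at this
    exact absurd this (ne_of_gt hb)
  · intro k
    by_cases hk : k = k₁
    · rw [hk]
      have hsplit : ∑ i ∈ univ.filter (fun i => c i = k₁), d i * u i
          = ∑ i ∈ univ.filter (fun i => c i = k₁ ∧ i ∈ V₁), d i * u i
            + ∑ i ∈ univ.filter (fun i => c i = k₁ ∧ i ∉ V₁), d i * u i := by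
        rw [← Finset.sum_union]
        · congr 1
          ext i
          simp only [Finset.mem_union, Finset.mem_filter, Finset.mem_univ, true_and]
          tauto
        · rw [Finset.disjoint_left]
          intro i hi hi'
          simp only [Finset.mem_filter, Finset.mem_univ, true_and] at hi hi'
          exact hi'.2 hi.2
      rw [hsplit]
      have e1 : ∑ i ∈ univ.filter (fun i => c i = k₁ ∧ i ∈ V₁), d i * u i = a * b := by
        rw [ha_def, Finset.sum_mul]
        apply Finset.sum_congr rfl
        intro i hi
        simp only [Finset.mem_filter, Finset.mem_univ, true_and] at hi
        simp [hu_def, hi.1, hi.2]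
      have e2 : ∑ i ∈ univ.filter (fun i => c i = k₁ ∧ i ∉ V₁), d i * u i = b * (-a) := by
        rw [hb_def, Finset.sum_mul]
        apply Finset.sum_congr rfl
        intro i hi
        simp only [Finset.mem_filter, Finset.mem_univ, true_and] at hi
        simp [hu_def, hi.1, hi.2]
      rw [e1, e2]; ring
    · apply Finset.sum_eq_zero
      intro i hi
      simp only [Finset.mem_filter, Finset.mem_univ, true_and] at hi
      have : c i ≠ k₁ := hi ▸ hk
      simp [hu_def, this]
  · rw [Matrix.add_mulVec, dotProduct_add, hq1, zero_add,
        ← Matrix.mulVec_mulVec, Matrix.dotProduct_mulVec, Matrix.vecMul_transpose, hLu]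
    simp
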